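/- Let x̃ and r be nonzero orthogonal vectors in ℂ^n and x a unit vector. Then sin²(span{x̃, r}, x) = (1 − cos²(r, x)/sin²(x̃, x)) · sin²(x̃, x), provided sin(x̃, x) ≠ 0, where sin²(S, x) = 1 − ‖P_S x‖² for the orthogonal projection P_S onto S, and cos(u, x) = |u*x|/(‖u‖‖x‖). -/

import Mathlib

open scoped ComplexInnerProductSpace

noncomputable section

/-- `cos²` of the angle between two vectors. -/
def cos2 {n : ℕ} (u x : EuclideanSpace ℂ (Fin n)) : ℝ :=
  ‖⟪u, x⟫‖ ^ 2 / (‖u‖ ^ 2 * ‖x‖ ^ 2)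

/-- `sin²` of the angle between two vectors. -/
def sin2 {n : ℕ} (u x : EuclideanSpace ℂ (Fin n)) : ℝ := 1 - cos2 u x

theorem stmt8 {n : ℕ} (xt r x : EuclideanSpace ℂ (Fin n))
    (hxt : xt ≠ 0) (hr : r ≠ 0) (horth : ⟪xt, r⟫ = 0) (hx : ‖x‖ = 1)
    (hsin : sin2 xt x ≠ 0) :
    1 - ‖(Submodule.orthogonalProjectionOnto (Submodule.span ℂ {xt, r}) x : EuclideanSpace ℂ (Fin n))‖ ^ 2
      = (1 - cos2 r x / sin2 xt x) * sin2 xt x := by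
  have hxt2 : (‖xt‖ : ℝ) ^ 2 ≠ 0 := pow_ne_zero _ (norm_ne_zero_iff.mpr hxt)
  have hr2 : (‖r‖ : ℝ) ^ 2 ≠ 0 := pow_ne_zero _ (norm_ne_zero_iff.mpr hr)
  have hxt2c : ((‖xt‖ : ℂ)) ^ 2 ≠ 0 := by exact_mod_cast hxt2
  have hr2c : ((‖r‖ : ℂ)) ^ 2 ≠ 0 := by exact_mod_cast hr2
  set a : ℂ := ⟪xt, x⟫ / (‖xt‖ ^ 2 : ℝ)
  set b : ℂ := ⟪r, x⟫ / (‖r‖ ^ 2 : ℝ)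
  set v : EuclideanSpace ℂ (Fin n) := a • xt + b • r with hv
  have hxtmem : xt ∈ Submodule.span ℂ {xt, r} :=
    Submodule.subset_span (by left; rfl)
  have hrmem : r ∈ Submodule.span ℂ {xt, r} :=
    Submodule.subset_span (by right; rfl)
  have hvmem : v ∈ Submodule.span ℂ {xt, r} :=
    Submodule.add_mem _ (Submodule.smul_mem _ _ hxtmem) (Submodule.smul_mem _ _ hrmem)
  have hxtself : ⟪xt, xt⟫ = ((‖xt‖ : ℝ) ^ 2 : ℂ) := by
    rw [inner_self_eq_norm_sq_to_K]; norm_num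
  have hrself : ⟪r, r⟫ = ((‖r‖ : ℝ) ^ 2 : ℂ) := by
    rw [inner_self_eq_norm_sq_to_K]; norm_num
  have horth' : ⟪r, xt⟫ = 0 := by rwa [inner_eq_zero_symm] at horth
  have hxvxt : ⟪x - v, xt⟫ = 0 := by
    rw [inner_sub_left, hv, inner_add_left, inner_smul_left, inner_smul_left, hxtself, horth']
    simp only [a, b, map_div₀, Complex.conj_ofReal, inner_conj_symm]
    push_cast
    field_simp
    simp [mul_div_assoc, hxt]
  have hxvr : ⟪x - v, r⟫ = 0 := by
    rw [inner_sub_left, hv, inner_add_left, inner_smul_left, inner_smul_left, hrself, horth]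
    simp only [a, b, map_div₀, Complex.conj_ofReal, inner_conj_symm]
    push_cast
    field_simp
    simp [mul_div_assoc, hr]
  have hproj : ((Submodule.orthogonalProjectionOnto (Submodule.span ℂ {xt, r}) x :
      EuclideanSpace ℂ (Fin n))) = v := by
    rw [← Submodule.starProjection_apply]
    apply Submodule.eq_starProjection_of_mem_of_inner_eq_zero hvmem
    intro w hw
    induction hw using Submodule.span_induction with
    | mem y hy =>
      rcases hy with rfl | rfl
      · exact hxvxt
      · exact hxvr
    | zero => simp
    | add y z _ _ hy hz => rw [inner_add_right, hy, hz, add_zero]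
    | smul c y _ hy => rw [inner_smul_right, hy, mul_zero]
  have hovw : ⟪a • xt, b • r⟫ = 0 := by
    rw [inner_smul_left, inner_smul_right, horth]; ring
  have hnv : ‖v‖ ^ 2 = ‖⟪xt, x⟫‖ ^ 2 / ‖xt‖ ^ 2 + ‖⟪r, x⟫‖ ^ 2 / ‖r‖ ^ 2 := by
    rw [hv, @norm_add_sq ℂ, hovw]
    simp only [map_zero, mul_zero, add_zero]
    rw [norm_smul, norm_smul]
    have ha : ‖a‖ = ‖⟪xt, x⟫‖ / ‖xt‖ ^ 2 := by
      rw [norm_div]; norm_num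
    have hb : ‖b‖ = ‖⟪r, x⟫‖ / ‖r‖ ^ 2 := by
      rw [norm_div]; norm_num
    rw [ha, hb]
    field_simp
  have hcxt : cos2 xt x = ‖⟪xt, x⟫‖ ^ 2 / ‖xt‖ ^ 2 := by
    rw [cos2, hx]; ring_nf
  have hcr : cos2 r x = ‖⟪r, x⟫‖ ^ 2 / ‖r‖ ^ 2 := by
    rw [cos2, hx]; ring_nf
  rw [hproj, hnv, ← hcxt, ← hcr, sub_mul, one_mul, div_mul_cancel₀ _ hsin, sin2]
  ring
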